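/- For a connected graph G on at least 3 vertices with diam(G) ≤ 4, vcfc(G) = 3 if and only if G has more than one cut-vertex. -/

import Mathlib

open SimpleGraph

/-- A vertex coloring makes `G` conflict-free vertex-connected if every pair of
distinct vertices is joined by a path on which some color appears on exactly one vertex. -/
def IsCFVertexConnColoring {V : Type*} (G : SimpleGraph V) (c : V → ℕ) : Prop :=
  ∀ u v : V, u ≠ v → ∃ p : G.Walk u v, p.IsPath ∧
    ∃ col : ℕ, (p.support.filter (fun x => c x = col)).length = 1

/-- The conflict-free vertex-connection number of `G`. -/
noncomputable def vcfConn {V : Type*} (G : SimpleGraph V) : ℕ :=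
  sInf {k | ∃ c : V → ℕ, (∀ v, c v < k) ∧ IsCFVertexConnColoring G c}

/-- `v` is a cut-vertex: deleting it disconnects the graph. -/
def IsCutVertex {V : Type*} (G : SimpleGraph V) (v : V) : Prop :=
  ¬ (G.induce {u | u ≠ v}).Connected

/-- `G` is 2-connected: it is connected and deleting any single vertex
leaves it connected. -/
def TwoConnected {V : Type*} (G : SimpleGraph V) : Prop :=
  G.Connected ∧ ∀ v : V, (G.induce {u | u ≠ v}).Connected

namespace CFT

variable {V : Type*} {G : SimpleGraph V}

/-- There is a walk from `u` to `v` avoiding `z`. -/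
def Av (G : SimpleGraph V) (z u v : V) : Prop := ∃ w : G.Walk u v, z ∉ w.support

lemma Av.refl {z u : V} (h : u ≠ z) : Av G z u u := ⟨Walk.nil, by simp [h.symm]⟩

lemma Av.symm {z u v : V} (h : Av G z u v) : Av G z v u := by
  obtain ⟨w, hw⟩ := h
  exact ⟨w.reverse, by simpa using hw⟩

lemma Av.trans {z u v x : V} (h : Av G z u v) (h' : Av G z v x) : Av G z u x := by
  obtain ⟨w, hw⟩ := h; obtain ⟨w', hw'⟩ := h'
  refine ⟨w.append w', fun hc => ?_⟩
  rcases (Walk.mem_support_append_iff _ _).1 hc with h | h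
  exacts [hw h, hw' h]

lemma Av.ne_left {z u v : V} (h : Av G z u v) : u ≠ z := by
  obtain ⟨w, hw⟩ := h
  rintro rfl; exact hw w.start_mem_support

lemma Av.ne_right {z u v : V} (h : Av G z u v) : v ≠ z := h.symm.ne_left

lemma Av.of_adj {z u v : V} (h : G.Adj u v) (hu : u ≠ z) (hv : v ≠ z) : Av G z u v := by
  refine ⟨Walk.cons h Walk.nil, ?_⟩
  simp [hu.symm, hv.symm, Walk.support_cons]

/-- The set of vertices separated from `t` by `z`. -/
def Sep (G : SimpleGraph V) (z t : V) : Set V := {v | v ≠ z ∧ ¬ Av G z v t}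

lemma Sep.ne {z t v : V} (h : v ∈ Sep G z t) : v ≠ z := h.1

lemma Sep.not_av {z t v : V} (h : v ∈ Sep G z t) : ¬ Av G z v t := h.2

lemma not_mem_sep_self {z t : V} (ht : t ≠ z) : t ∉ Sep G z t := by
  intro h; exact h.2 (Av.refl ht)

lemma sep_comm {z t v : V} (ht : t ≠ z) (h : v ∈ Sep G z t) : t ∈ Sep G z v :=
  ⟨ht, fun hav => h.2 hav.symm⟩

lemma not_mem_sep_of_av {z t v : V} (h : Av G z v t) : v ∉ Sep G z t := fun hc => hc.2 h

/-- A vertex not in `Sep G z t` and different from `z` can reach `t` avoiding `z`. -/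
lemma av_of_not_mem_sep {z t v : V} (hv : v ≠ z) (h : v ∉ Sep G z t) : Av G z v t := by
  by_contra hc; exact h ⟨hv, hc⟩

/-- Members of a walk avoiding `z`, starting in `Sep G z t`, stay in `Sep G z t`. -/
lemma sep_closure {z t u v : V} (hu : u ∈ Sep G z t) (w : G.Walk u v) (hw : z ∉ w.support) :
    ∀ x ∈ w.support, x ∈ Sep G z t := by
  intro x hx
  classical
  have hxz : x ≠ z := fun h => hw (h ▸ hx)
  refine ⟨hxz, fun hav => hu.2 (Av.trans ⟨w.takeUntil x hx, fun hc =>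
    hw ((w.support_takeUntil_subset hx) hc)⟩ hav)⟩

/-- If a path ends at `x`, then `x` does not appear in a proper prefix `takeUntil y` for `y ≠ x`. -/
lemma end_not_mem_takeUntil [DecidableEq V] {a x y : V} {p : G.Walk a x} (hp : p.IsPath)
    (hy : y ∈ p.support) (hyx : y ≠ x) : x ∉ (p.takeUntil y hy).support := by
  intro hx
  have hspec := Walk.take_spec p hy
  have hnd : ((p.takeUntil y hy).append (p.dropUntil y hy)).support.Nodup := by
    rw [hspec]; exact hp.support_nodup
  rw [Walk.support_append, List.nodup_append] at hnd
  have hxd : x ∈ (p.dropUntil y hy).support := Walk.end_mem_support _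
  rw [Walk.support_eq_cons (p.dropUntil y hy)] at hxd
  rcases List.mem_cons.mp hxd with h | h
  · exact hyx h.symm
  · exact hnd.2.2 x hx x h rfl

/-- From membership in `Sep`, one can reach the separator avoiding the far side vertex. -/
lemma av_to_separator {z t v : V} (hconn : G.Preconnected) (hv : v ∈ Sep G z t) (hzt : z ≠ t) :
    Av G t v z := by
  classical
  obtain ⟨w⟩ := hconn v z
  have hp := w.bypass_isPath
  have hz : z ∈ w.bypass.support := Walk.end_mem_support _
  -- every v→z walk contains ... rather: use any v→z path, z is its end; we need z in the path
  -- we need: some v → z path contains no t except possibly... we claim t ∉ path or use prefix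
  by_cases ht : t ∈ w.bypass.support
  · exact absurd ⟨w.bypass.takeUntil t ht, end_not_mem_takeUntil hp ht hzt.symm⟩ hv.2
  · exact ⟨w.bypass, ht⟩

end CFT

namespace CFT2
open CFT
variable {V : Type*} {G : SimpleGraph V}

/-- Gluing two paths whose supports meet only at the junction. -/
lemma isPath_append {u v w : V} {p : G.Walk u v} {q : G.Walk v w} (hp : p.IsPath) (hq : q.IsPath)
    (h : ∀ x, x ∈ p.support → x ∈ q.support → x = v) : (p.append q).IsPath := by
  rw [Walk.isPath_def, Walk.support_append, List.nodup_append]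
  refine ⟨hp.support_nodup, ?_, ?_⟩
  · have := hq.support_nodup
    rw [Walk.support_eq_cons q] at this
    exact this.of_cons
  · rintro x hxp _ hxq rfl
    have hxq' : x ∈ q.support := List.mem_of_mem_tail hxq
    have hxv : x = v := h x hxp hxq'
    subst hxv
    have := hq.support_nodup
    rw [Walk.support_eq_cons q] at this
    exact (List.nodup_cons.mp this).1 hxq

/-- the homomorphism from an induced subgraph into the graph -/
def indHom (G : SimpleGraph V) (s : Set V) : (G.induce s) →g G where
  toFun := Subtype.val
  map_rel' := fun {a b} h => by simpa using h

lemma proj_walk {s : Set V} {a b : s} (w : (G.induce s).Walk a b) :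
    ∃ p : G.Walk a.1 b.1, p.support = w.support.map Subtype.val ∧ (w.IsPath → p.IsPath) := by
  refine ⟨w.map (indHom G s), ?_, fun h => ?_⟩
  · exact Walk.support_map _ _
  · exact Walk.map_isPath_of_injective Subtype.val_injective h

lemma lift_walk {s : Set V} {a b : V} (w : G.Walk a b) (ha : a ∈ s) (hb : b ∈ s)
    (h : ∀ x ∈ w.support, x ∈ s) :
    ∃ W : (G.induce s).Walk ⟨a, ha⟩ ⟨b, hb⟩, W.support.map Subtype.val = w.support := by
  induction w with
  | nil => exact ⟨Walk.nil, by simp⟩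
  | @cons a c b adj p ih =>
    have hc : c ∈ s := h c (by simp [Walk.support_cons])
    obtain ⟨W, hW⟩ := ih hc hb (fun x hx => h x (by
      rw [Walk.support_cons]
      exact List.mem_cons_of_mem _ hx))
    refine ⟨Walk.cons (by simpa using adj) W, ?_⟩
    simp [Walk.support_cons, hW]

lemma cut_of_not_av {x u v : V} (hu : u ≠ x) (hv : v ≠ x) (hne : ¬ Av G x u v) :
    IsCutVertex G x := by
  intro hconn
  obtain ⟨w⟩ := hconn.preconnected ⟨u, hu⟩ ⟨v, hv⟩
  obtain ⟨p, hp, _⟩ := proj_walk w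
  refine hne ⟨p, fun hc => ?_⟩
  rw [hp] at hc
  obtain ⟨yy, _, hval⟩ := List.mem_map.mp hc
  exact yy.2 hval

lemma av_of_not_cut {y : V} (h : ¬ IsCutVertex G y) {a b : V} (ha : a ≠ y) (hb : b ≠ y) :
    Av G y a b := by
  rw [IsCutVertex, not_not] at h
  obtain ⟨w⟩ := h.preconnected ⟨a, ha⟩ ⟨b, hb⟩
  obtain ⟨p, hp, _⟩ := proj_walk w
  refine ⟨p, fun hc => ?_⟩
  rw [hp] at hc
  obtain ⟨zz, _, hval⟩ := List.mem_map.mp hc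
  exact zz.2 hval

lemma not_av_of_cut {x : V} (h : IsCutVertex G x) (hne : ∃ u : V, u ≠ x) :
    ∃ u v, u ≠ x ∧ v ≠ x ∧ ¬ Av G x u v := by
  by_contra hc
  push_neg at hc
  apply h
  rw [connected_iff]
  constructor
  · rintro ⟨a, ha⟩ ⟨b, hb⟩
    obtain ⟨w, hw⟩ := hc a b ha hb
    obtain ⟨W, _⟩ := lift_walk (s := {u | u ≠ x}) w ha hb (fun z hz => fun hzx => hw (hzx ▸ hz))
    exact ⟨W⟩
  · exact ⟨⟨hne.choose, hne.choose_spec⟩⟩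

/-- a cut vertex separates something from any given other vertex -/
lemma sep_nonempty {x : V} (h : IsCutVertex G x) (hne : ∃ u : V, u ≠ x) (t : V) (ht : t ≠ x) :
    ∃ a, a ∈ Sep G x t := by
  obtain ⟨u, v, hu, hv, huv⟩ := not_av_of_cut h hne
  by_cases h1 : Av G x u t
  · by_cases h2 : Av G x v t
    · exact absurd (h1.trans h2.symm) huv
    · exact ⟨v, hv, h2⟩
  · exact ⟨u, hu, h1⟩

lemma filter_eq_singleton {l : List V} (hnd : l.Nodup) {pred : V → Prop} [DecidablePred pred]
    {w : V} (hw : w ∈ l) (hpw : pred w) (huniq : ∀ x ∈ l, pred x → x = w) :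
    l.filter (fun x => pred x) = [w] := by
  induction l with
  | nil => cases hw
  | cons a t ih =>
    rw [List.nodup_cons] at hnd
    by_cases ha : a = w
    · subst ha
      rw [List.filter_cons_of_pos (by simpa using hpw)]
      have ht : t.filter (fun x => pred x) = [] := by
        rw [List.filter_eq_nil_iff]
        intro x hx
        simp only [decide_eq_true_eq]
        intro hpx
        exact hnd.1 ((huniq x (List.mem_cons_of_mem _ hx) hpx) ▸ hx)
      rw [ht]
    · have hpa : ¬ pred a := fun hp => ha (huniq a List.mem_cons_self hp)
      rw [List.filter_cons_of_neg (by simpa using hpa)]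
      exact ih hnd.2 ((List.mem_cons.mp hw).resolve_left (fun h => ha h.symm))
        (fun x hx hpx => huniq x (List.mem_cons_of_mem _ hx) hpx)

lemma filter_one_of_unique {c : V → ℕ} {col : ℕ} {u v : V} {p : G.Walk u v} (hp : p.IsPath)
    {w : V} (hw : w ∈ p.support) (hcw : c w = col)
    (huniq : ∀ x ∈ p.support, c x = col → x = w) :
    (p.support.filter (fun x => c x = col)).length = 1 := by
  rw [filter_eq_singleton hp.support_nodup hw hcw huniq]
  rfl

lemma no_unique_color_of_const {c : V → ℕ} {u v : V} {p : G.Walk u v} (hne : u ≠ v) {α : ℕ}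
    (hall : ∀ x ∈ p.support, c x = α) :
    ¬ ∃ col, (p.support.filter (fun x => c x = col)).length = 1 := by
  rintro ⟨col, hl⟩
  obtain ⟨a, hfa⟩ := List.length_eq_one_iff.mp hl
  have haf : a ∈ p.support.filter (fun x => c x = col) := by rw [hfa]; exact List.mem_singleton_self a
  rw [List.mem_filter, decide_eq_true_eq] at haf
  have hcol : col = α := (hall a haf.1) ▸ haf.2.symm
  rw [hcol] at hfa
  have hflt : p.support.filter (fun x => c x = α) = p.support :=
    List.filter_eq_self.mpr (fun x hx => by simpa using hall x hx)
  rw [hflt] at hfa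
  have hu : u ∈ p.support := Walk.start_mem_support p
  have hv : v ∈ p.support := Walk.end_mem_support p
  rw [hfa] at hu hv
  exact hne ((List.mem_singleton.mp hu).trans (List.mem_singleton.mp hv).symm)

lemma exists_first_hit {t s : V} (R : G.Walk t s) (S : Set V) :
    R.IsPath → s ∈ S → ∃ (z : V) (_ : z ∈ S) (R' : G.Walk t z), R'.IsPath ∧
      (∀ x ∈ R'.support, x ∈ R.support) ∧ (∀ x ∈ R'.support, x ∈ S → x = z) := by
  induction R with
  | nil =>
    intro _ hs
    exact ⟨_, hs, Walk.nil, Walk.IsPath.nil, by simp, fun x hx _ => by simpa using hx⟩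
  | @cons t m s adj p ih =>
    intro hR hs
    by_cases ht : t ∈ S
    · exact ⟨t, ht, Walk.nil, Walk.IsPath.nil, by simp [Walk.support_cons],
        fun x hx _ => by simpa using hx⟩
    · obtain ⟨z, hz, R'', hR''p, hsub, huniq⟩ := ih (hR.of_cons) hs
      have htp : t ∉ p.support := ((Walk.cons_isPath_iff adj p).mp hR).2
      refine ⟨z, hz, Walk.cons adj R'', hR''p.cons (fun hc => htp (hsub t hc)), ?_, ?_⟩
      · intro x hx
        rw [Walk.support_cons, List.mem_cons] at hx ⊢
        exact hx.imp id (fun h => hsub x h)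
      · intro x hx hxS
        rw [Walk.support_cons, List.mem_cons] at hx
        rcases hx with rfl | hx
        · exact absurd hxS ht
        · exact huniq x hx hxS

end CFT2

namespace LemA
open CFT CFT2
variable {V : Type*} {G : SimpleGraph V}

lemma path_to_sep_support [DecidableEq V] {x y a : V} (ha : a ∈ Sep G x y) {p : G.Walk a x}
    (hp : p.IsPath) : ∀ v ∈ p.support, v = x ∨ v ∈ Sep G x y := by
  intro v hv
  by_cases hvx : v = x
  · exact Or.inl hvx
  · refine Or.inr ⟨hvx, fun hav => ha.2 (Av.trans ⟨p.takeUntil v hv,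
      end_not_mem_takeUntil hp hv hvx⟩ hav)⟩

lemma walk_through_sep {x y a b : V} (hconn : G.Preconnected) (hxy : x ≠ y)
    (ha : a ∈ Sep G x y) (hb : b ∈ Sep G y x) (w : G.Walk a b) : x ∈ w.support := by
  by_contra hxw
  have h1 : Av G x b y := av_to_separator hconn hb hxy.symm
  exact ha.2 (Av.trans ⟨w, hxw⟩ h1)

lemma sep_disjoint {x y a : V} (hconn : G.Preconnected) (hxy : x ≠ y)
    (ha : a ∈ Sep G x y) : a ∉ Sep G y x := by
  intro hb
  exact hb.2 (av_to_separator hconn ha hxy)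

lemma mem_filter_col {c : V → ℕ} {col : ℕ} {l : List V} {z : V} (hz : z ∈ l) (h : c z = col) :
    z ∈ l.filter (fun w => c w = col) := List.mem_filter.mpr ⟨hz, by simpa using h⟩

/-- the monochrome contradiction for the pair (a, x) with `a ∈ Sep G x y` -/
lemma mono_contra [DecidableEq V] {x y a : V} {c : V → ℕ} (hcf : IsCFVertexConnColoring G c)
    (ha : a ∈ Sep G x y) (hmono : ∀ v ∈ Sep G x y, c v = c x) : False := by
  obtain ⟨p, hp, hcol⟩ := hcf a x ha.1
  refine no_unique_color_of_const (c := c) ha.1 (α := c x) ?_ hcol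
  intro v hv
  rcases path_to_sep_support ha hp v hv with rfl | hv'
  · rfl
  · exact hmono v hv'

theorem lemmaA [Nontrivial V] (hconn : G.Connected) {x y : V} (hxy : x ≠ y)
    (hx : IsCutVertex G x) (hy : IsCutVertex G y) {c : V → ℕ} (hc : ∀ v, c v < 2) :
    ¬ IsCFVertexConnColoring G c := by
  classical
  intro hcf
  have hpre := hconn.preconnected
  obtain ⟨a0, ha0⟩ := sep_nonempty hx (exists_ne x) y hxy.symm
  obtain ⟨b0, hb0⟩ := sep_nonempty hy (exists_ne y) x hxy
  -- basic facts about elements of the two separation sets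
  have hAy : ∀ a ∈ Sep G x y, a ≠ y := fun a ha hay => ha.2 (by
    rw [hay]; exact Av.refl hxy.symm)
  have hBx : ∀ b ∈ Sep G y x, b ≠ x := fun b hb hbx => hb.2 (by
    rw [hbx]; exact Av.refl hxy)
  have hab_ne : ∀ a ∈ Sep G x y, ∀ b ∈ Sep G y x, a ≠ b := by
    rintro a ha b hb rfl
    exact sep_disjoint hpre hxy ha hb
  -- pair (a, b) always gives a path through x and y with a unique color
  have pairfact : ∀ a ∈ Sep G x y, ∀ b ∈ Sep G y x,
      ∃ p : G.Walk a b, p.IsPath ∧ x ∈ p.support ∧ y ∈ p.support ∧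
        ∃ col, (p.support.filter (fun w => c w = col)).length = 1 := by
    intro a ha b hb
    obtain ⟨p, hp, hcol⟩ := hcf a b (hab_ne a ha b hb)
    refine ⟨p, hp, walk_through_sep hpre hxy ha hb p, ?_, hcol⟩
    have := walk_through_sep hpre hxy.symm hb ha p.reverse
    rwa [Walk.support_reverse, List.mem_reverse] at this
  by_cases hcxy : c x = c y
  · -- both cut vertices share a color
    have hmono : (∀ a ∈ Sep G x y, c a = c x) ∨ (∀ b ∈ Sep G y x, c b = c x) := by
      by_contra hcon
      push_neg at hcon
      obtain ⟨⟨a, ha, hca⟩, ⟨b, hb, hcb⟩⟩ := hcon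
      obtain ⟨p, hp, hxp, hyp, col, hlen⟩ := pairfact a ha b hb
      obtain ⟨e, he⟩ := List.length_eq_one_iff.mp hlen
      have hecol : c e = col := by
        have : e ∈ p.support.filter (fun w => c w = col) := by
          rw [he]; exact List.mem_singleton_self e
        simpa using (List.mem_filter.mp this).2
      have hax : a ∈ p.support := p.start_mem_support
      have hbx : b ∈ p.support := p.end_mem_support
      by_cases hcolx : col = c x
      · have h1 : x = e := by
          have := mem_filter_col hxp hcolx.symm; rw [he] at this; exact List.mem_singleton.mp this
        have h2 : y = e := by
          have := mem_filter_col hyp (hcxy ▸ hcolx.symm : c y = col)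
          rw [he] at this; exact List.mem_singleton.mp this
        exact hxy (h1.trans h2.symm)
      · have hcab : c a = col := by have := hc a; have := hc x; have := hc e; omega
        have hcbb : c b = col := by have := hc b; have := hc x; have := hc e; omega
        have h1 : a = e := by
          have := mem_filter_col hax hcab; rw [he] at this; exact List.mem_singleton.mp this
        have h2 : b = e := by
          have := mem_filter_col hbx hcbb; rw [he] at this; exact List.mem_singleton.mp this
        exact hab_ne a ha b hb (h1.trans h2.symm)
    rcases hmono with hA | hB
    · exact mono_contra hcf ha0 hA
    · exact mono_contra hcf hb0 (fun v hv => (hB v hv).trans hcxy)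
  · -- the cut vertices have different colors
    have hconst : ∀ a ∈ Sep G x y, ∀ b ∈ Sep G y x, c a = c b := by
      intro a ha b hb
      obtain ⟨p, hp, hxp, hyp, col, hlen⟩ := pairfact a ha b hb
      obtain ⟨e, he⟩ := List.length_eq_one_iff.mp hlen
      have huniq : ∀ w ∈ p.support, c w = col → w = e := by
        intro w hw hcw
        have := mem_filter_col hw hcw; rw [he] at this; exact List.mem_singleton.mp this
      have hax : a ∈ p.support := p.start_mem_support
      have hbx : b ∈ p.support := p.end_mem_support
      have hecol : c e = col := by
        have : e ∈ p.support.filter (fun w => c w = col) := by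
          rw [he]; exact List.mem_singleton_self e
        simpa using (List.mem_filter.mp this).2
      by_cases hcolx : col = c x
      · -- e = x, so everything else misses color c x
        have hex : x = e := by
          have := mem_filter_col hxp hcolx.symm; rw [he] at this; exact List.mem_singleton.mp this
        have h1 : c a ≠ col := fun hca => ha.1 ((huniq a hax hca).trans hex.symm)
        have h2 : c b ≠ col := fun hcb => hBx b hb ((huniq b hbx hcb).trans hex.symm)
        have := hc a; have := hc b; have := hc x; omega
      · by_cases hcoly : col = c y
        · have hey : y = e := by
            have := mem_filter_col hyp hcoly.symm; rw [he] at this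
            exact List.mem_singleton.mp this
          have h1 : c a ≠ col := fun hca => hAy a ha ((huniq a hax hca).trans hey.symm)
          have h2 : c b ≠ col := fun hcb => hb.1 ((huniq b hbx hcb).trans hey.symm)
          have := hc a; have := hc b; have := hc y; omega
        · have := hc x; have := hc y; have := hc e; omega
    have hγ : c a0 = c x ∨ c a0 = c y := by have := hc a0; have := hc x; have := hc y; omega
    rcases hγ with hg | hg
    · refine mono_contra hcf ha0 (fun v hv => ?_)
      exact (hconst v hv b0 hb0).trans ((hconst a0 ha0 b0 hb0).symm.trans hg)
    · refine mono_contra hcf hb0 (fun v hv => ?_)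
      exact (hconst a0 ha0 v hv).symm.trans hg
end LemA

namespace Fan
open CFT CFT2
variable {W : Type*} {Γ : SimpleGraph W}

lemma mem_support_reverse {u v x : W} (p : Γ.Walk u v) :
    x ∈ p.reverse.support ↔ x ∈ p.support := by
  rw [Walk.support_reverse, List.mem_reverse]

lemma mem_take_not_drop [DecidableEq W] {a b y : W} {P : Γ.Walk a b} (hP : P.IsPath)
    (hy : y ∈ P.support) {x : W} (hx : x ∈ (P.takeUntil y hy).support) (hxy : x ≠ y) :
    x ∉ (P.dropUntil y hy).support := by
  intro hxd
  have hnd : ((P.takeUntil y hy).append (P.dropUntil y hy)).support.Nodup := by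
    rw [Walk.take_spec P hy]; exact hP.support_nodup
  rw [Walk.support_append, List.nodup_append] at hnd
  rw [Walk.support_eq_cons (P.dropUntil y hy)] at hxd
  rcases List.mem_cons.mp hxd with rfl | hxd
  · exact hxy rfl
  · exact hnd.2.2 x hx x hxd rfl

lemma helperA [DecidableEq W] {s m t : W} {P₁ P₂ : Γ.Walk s m} (h₁ : P₁.IsPath) (h₂ : P₂.IsPath)
    (hmeet : ∀ x, x ∈ P₁.support → x ∈ P₂.support → x = s ∨ x = m)
    (ht1 : t ∈ P₁.support) (hts : t ≠ s) (htm : t ≠ m) :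
    ∃ (p q : Γ.Walk s t), p.IsPath ∧ q.IsPath ∧
      (∀ x, x ∈ p.support → x ∈ q.support → x = s ∨ x = t) := by
  refine ⟨P₁.takeUntil t ht1, P₂.append (P₁.dropUntil t ht1).reverse, h₁.takeUntil ht1, ?_, ?_⟩
  · refine isPath_append h₂ (h₁.dropUntil ht1).reverse (fun x hx2 hxr => ?_)
    rw [mem_support_reverse] at hxr
    have hx1 : x ∈ P₁.support := (Walk.support_dropUntil_subset P₁ ht1) hxr
    rcases hmeet x hx1 hx2 with rfl | rfl
    · exact absurd hxr (mem_take_not_drop h₁ ht1 (Walk.start_mem_support _) hts.symm)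
    · rfl
  · intro x hxp hxq
    rcases (Walk.mem_support_append_iff _ _).mp hxq with hx2 | hxr
    · have hx1 : x ∈ P₁.support := (Walk.support_takeUntil_subset P₁ ht1) hxp
      rcases hmeet x hx1 hx2 with rfl | rfl
      · exact Or.inl rfl
      · exact absurd hxp (end_not_mem_takeUntil h₁ ht1 htm)
    · rw [mem_support_reverse] at hxr
      by_cases hxt : x = t
      · exact Or.inr hxt
      · exact absurd hxr (mem_take_not_drop h₁ ht1 hxp hxt)

lemma helperB [DecidableEq W] {s m t z : W} {P₁ P₂ : Γ.Walk s m} (adj : Γ.Adj m t)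
    (h₁ : P₁.IsPath) (h₂ : P₂.IsPath)
    (hmeet : ∀ x, x ∈ P₁.support → x ∈ P₂.support → x = s ∨ x = m)
    (ht1 : t ∉ P₁.support) (ht2 : t ∉ P₂.support) {R' : Γ.Walk t z} (hR' : R'.IsPath)
    (hmR' : m ∉ R'.support) (hz1 : z ∈ P₁.support)
    (huniq : ∀ x ∈ R'.support, (x ∈ P₁.support ∨ x ∈ P₂.support) → x = z) :
    ∃ (p q : Γ.Walk s t), p.IsPath ∧ q.IsPath ∧
      (∀ x, x ∈ p.support → x ∈ q.support → x = s ∨ x = t) := by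
  have hzm : z ≠ m := fun h => hmR' (h ▸ R'.end_mem_support)
  refine ⟨(P₁.takeUntil z hz1).append R'.reverse, P₂.append (Walk.cons adj Walk.nil), ?_, ?_, ?_⟩
  · refine isPath_append (h₁.takeUntil hz1) hR'.reverse (fun x hxt hxr => ?_)
    rw [mem_support_reverse] at hxr
    exact huniq x hxr (Or.inl ((Walk.support_takeUntil_subset P₁ hz1) hxt))
  · refine isPath_append h₂ ?_ (fun x hx2 hxe => ?_)
    · exact Walk.IsPath.nil.cons (by simp [adj.ne])
    · rw [Walk.support_cons] at hxe
      rcases List.mem_cons.mp hxe with rfl | hxe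
      · rfl
      · exact absurd ((List.mem_singleton.mp (by simpa using hxe)) ▸ hx2) ht2
  · intro x hxp hxq
    rcases (Walk.mem_support_append_iff _ _).mp hxq with hx2 | hxe
    · rcases (Walk.mem_support_append_iff _ _).mp hxp with hxt | hxr
      · have hx1 : x ∈ P₁.support := (Walk.support_takeUntil_subset P₁ hz1) hxt
        rcases hmeet x hx1 hx2 with rfl | rfl
        · exact Or.inl rfl
        · exact absurd hxt (end_not_mem_takeUntil h₁ hz1 hzm)
      · rw [mem_support_reverse] at hxr
        have hxz : x = z := huniq x hxr (Or.inr hx2)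
        subst hxz
        rcases hmeet x hz1 hx2 with rfl | rfl
        · exact Or.inl rfl
        · exact absurd rfl hzm
    · rw [Walk.support_cons] at hxe
      rcases List.mem_cons.mp hxe with rfl | hxe
      · rcases (Walk.mem_support_append_iff _ _).mp hxp with hxt | hxr
        · exact absurd hxt (end_not_mem_takeUntil h₁ hz1 hzm)
        · rw [mem_support_reverse] at hxr
          exact absurd hxr hmR'
      · exact Or.inr (List.mem_singleton.mp (by simpa using hxe))

theorem two_paths (hpre : Γ.Preconnected)
    (h2 : ∀ (z u v : W), u ≠ z → v ≠ z → Av Γ z u v) :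
    ∀ (n : ℕ) (s t : W), s ≠ t → Γ.dist s t = n →
    ∃ (p q : Γ.Walk s t), p.IsPath ∧ q.IsPath ∧
      (∀ x, x ∈ p.support → x ∈ q.support → x = s ∨ x = t) := by
  classical
  intro n
  induction n using Nat.strong_induction_on with
  | _ n ih =>
    intro s t hst hdist
    have hreach : Γ.Reachable s t := hpre s t
    have hconn : Γ.Connected := (connected_iff _).mpr ⟨hpre, ⟨s⟩⟩
    have hpos : 0 < n := hdist ▸ hreach.pos_dist_of_ne hst
    by_cases hn1 : n = 1
    · have hadj : Γ.Adj s t := by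
        rw [← dist_eq_one_iff_adj]; rw [hdist, hn1]
      have hP : (Walk.cons hadj Walk.nil : Γ.Walk s t).IsPath :=
        Walk.IsPath.nil.cons (by simp [hst])
      refine ⟨_, _, hP, hP, fun x hx _ => ?_⟩
      rw [Walk.support_cons] at hx
      rcases List.mem_cons.mp hx with rfl | hx
      · exact Or.inl rfl
      · exact Or.inr (List.mem_singleton.mp (by simpa using hx))
    · -- n ≥ 2
      have hn2 : 2 ≤ n := by omega
      obtain ⟨p₀, hp₀, hl₀⟩ := hreach.exists_path_of_dist
      rw [hdist] at hl₀
      -- find the penultimate vertex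
      cases hrev : p₀.reverse with
      | nil =>
        exfalso
        have : p₀.length = 0 := by
          have := congrArg Walk.length hrev
          rw [Walk.length_reverse] at this
          simpa using this
        omega
      | cons adj q =>
      rename_i m
      have hqlen : q.length = n - 1 := by
        have := congrArg Walk.length hrev
        rw [Walk.length_reverse, hl₀, Walk.length_cons] at this
        omega
      have hdistm : Γ.dist s m = n - 1 := by
        have h1 : Γ.dist s m ≤ n - 1 := by
          have := dist_le q.reverse
          rwa [Walk.length_reverse, hqlen] at this
        have h2 : Γ.dist s t ≤ Γ.dist s m + 1 := by
          calc Γ.dist s t ≤ Γ.dist s m + Γ.dist m t := hconn.dist_triangle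
            _ ≤ Γ.dist s m + 1 := by
                have := dist_le (Walk.cons adj.symm Walk.nil : Γ.Walk m t)
                simp only [Walk.length_cons, Walk.length_nil] at this
                omega
        omega
      have hms : m ≠ s := by
        intro h
        rw [h] at hdistm
        rw [dist_self] at hdistm
        omega
      have hmt : m ≠ t := adj.ne'
      have hmt2 : t ≠ m := adj.ne
      obtain ⟨P₁, P₂, h₁, h₂, hmeet⟩ := ih (n-1) (by omega) s m hms.symm hdistm
      by_cases ht1 : t ∈ P₁.support
      · exact helperA h₁ h₂ hmeet ht1 hst.symm hmt.symm
      by_cases ht2 : t ∈ P₂.support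
      · obtain ⟨p, q, hp, hq, hh⟩ := helperA h₂ h₁
          (fun x hx2 hx1 => hmeet x hx1 hx2) ht2 hst.symm hmt.symm
        exact ⟨p, q, hp, hq, hh⟩
      · obtain ⟨w₀, hw₀⟩ := h2 m t s hmt.symm hms.symm
        have hRp : w₀.bypass.IsPath := w₀.bypass_isPath
        have hRm : m ∉ w₀.bypass.support := fun hc => hw₀ (w₀.support_bypass_subset hc)
        obtain ⟨z, hzS, R', hR', hsub, huniq⟩ := exists_first_hit w₀.bypass
          {x | x ∈ P₁.support ∨ x ∈ P₂.support} hRp (Or.inl (Walk.start_mem_support P₁))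
        have hmR' : m ∉ R'.support := fun hc => hRm (hsub m hc)
        rcases hzS with hz1 | hz2
        · exact helperB adj.symm h₁ h₂ hmeet ht1 ht2 hR' hmR' hz1
            (fun x hx hS => huniq x hx hS)
        · obtain ⟨p, q, hp, hq, hh⟩ := helperB adj.symm h₂ h₁
            (fun x hx2 hx1 => hmeet x hx1 hx2) ht2 ht1 hR' hmR' hz2
            (fun x hx hS => huniq x hx (Or.symm hS))
          exact ⟨p, q, hp, hq, hh⟩

/-- Fan lemma: in a `2`-connected graph, any two vertices are joined by a path through any
    prescribed third vertex. -/
theorem fan_lemma (hpre : Γ.Preconnected)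
    (h2 : ∀ (z u v : W), u ≠ z → v ≠ z → Av Γ z u v)
    {u v w : W} (huv : u ≠ v) (huw : u ≠ w) (hvw : v ≠ w) :
    ∃ p : Γ.Walk u v, p.IsPath ∧ w ∈ p.support := by
  classical
  obtain ⟨P₁, P₂, h₁, h₂, hmeet⟩ := two_paths hpre h2 (Γ.dist u w) u w huw rfl
  -- helper for the case v ∈ P₁
  have onpath : ∀ (P₁ P₂ : Γ.Walk u w), P₁.IsPath → P₂.IsPath →
      (∀ x, x ∈ P₁.support → x ∈ P₂.support → x = u ∨ x = w) → v ∈ P₁.support →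
      ∃ p : Γ.Walk u v, p.IsPath ∧ w ∈ p.support := by
    intro P₁ P₂ h₁ h₂ hmeet hv1
    refine ⟨P₂.append (P₁.dropUntil v hv1).reverse, ?_, ?_⟩
    · refine isPath_append h₂ (h₁.dropUntil hv1).reverse (fun x hx2 hxr => ?_)
      rw [mem_support_reverse] at hxr
      have hx1 : x ∈ P₁.support := (Walk.support_dropUntil_subset P₁ hv1) hxr
      rcases hmeet x hx1 hx2 with rfl | rfl
      · exact absurd hxr (mem_take_not_drop h₁ hv1 (Walk.start_mem_support _) huv)
      · rfl
    · rw [Walk.mem_support_append_iff]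
      exact Or.inl P₂.end_mem_support
  by_cases hv1 : v ∈ P₁.support
  · exact onpath P₁ P₂ h₁ h₂ hmeet hv1
  by_cases hv2 : v ∈ P₂.support
  · exact onpath P₂ P₁ h₂ h₁ (fun x hx2 hx1 => hmeet x hx1 hx2) hv2
  · obtain ⟨w₀, hw₀⟩ := h2 u v w huv.symm huw.symm
    have hQp : w₀.bypass.IsPath := w₀.bypass_isPath
    have hQu : u ∉ w₀.bypass.support := fun hc => hw₀ (w₀.support_bypass_subset hc)
    obtain ⟨z, hzS, Q', hQ', hsub, huniq⟩ := exists_first_hit w₀.bypass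
      {x | x ∈ P₁.support ∨ x ∈ P₂.support} hQp (Or.inl (Walk.end_mem_support P₁))
    have huQ' : u ∉ Q'.support := fun hc => hQu (hsub u hc)
    have hzu : z ≠ u := fun h => huQ' (h ▸ Q'.end_mem_support)
    -- helper for z ∈ P₁ case
    have main : ∀ (P₁ P₂ : Γ.Walk u w), P₁.IsPath → P₂.IsPath →
        (∀ x, x ∈ P₁.support → x ∈ P₂.support → x = u ∨ x = w) → z ∈ P₁.support →
        (∀ x ∈ Q'.support, (x ∈ P₁.support ∨ x ∈ P₂.support) → x = z) →
        v ∉ P₂.support →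
        ∃ p : Γ.Walk u v, p.IsPath ∧ w ∈ p.support := by
      intro P₁ P₂ h₁ h₂ hmeet hz1 huniq hv2
      have inner_path : ((P₁.dropUntil z hz1).reverse.append Q'.reverse).IsPath := by
        refine isPath_append (h₁.dropUntil hz1).reverse hQ'.reverse (fun x hxr hxq => ?_)
        rw [mem_support_reverse] at hxr hxq
        exact huniq x hxq (Or.inl ((Walk.support_dropUntil_subset P₁ hz1) hxr))
      refine ⟨P₂.append ((P₁.dropUntil z hz1).reverse.append Q'.reverse), ?_, ?_⟩
      · refine isPath_append h₂ inner_path (fun x hx2 hxi => ?_)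
        rcases (Walk.mem_support_append_iff _ _).mp hxi with hxr | hxq
        · rw [mem_support_reverse] at hxr
          have hx1 : x ∈ P₁.support := (Walk.support_dropUntil_subset P₁ hz1) hxr
          rcases hmeet x hx1 hx2 with rfl | rfl
          · exact absurd hxr (mem_take_not_drop h₁ hz1 (Walk.start_mem_support _) hzu.symm)
          · rfl
        · rw [mem_support_reverse] at hxq
          have hxz : x = z := huniq x hxq (Or.inr hx2)
          subst hxz
          rcases hmeet x hz1 hx2 with rfl | rfl
          · exact absurd rfl hzu
          · rfl
      · rw [Walk.mem_support_append_iff]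
        exact Or.inl P₂.end_mem_support
    rcases hzS with hz1 | hz2
    · exact main P₁ P₂ h₁ h₂ hmeet hz1 huniq hv2
    · exact main P₂ P₁ h₂ h₁ (fun x hx2 hx1 => hmeet x hx1 hx2) hz2
        (fun x hx hS => huniq x hx (Or.symm hS)) hv1

end Fan

namespace Glue
open CFT CFT2 Fan
variable {V : Type*} {G : SimpleGraph V}

/-- Main closure lemma: a path between two vertices of the component of `G - w`
containing `u0` (together with `w`) stays in that set. -/
lemma path_supp_in_comp [DecidableEq V] {w u0 a b : V} {q : G.Walk a b} (hq : q.IsPath)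
    (ha : a = w ∨ Av G w u0 a) (hb : b = w ∨ Av G w u0 b) :
    ∀ x ∈ q.support, x = w ∨ Av G w u0 x := by
  intro x hx
  by_cases hxw : x = w
  · exact Or.inl hxw
  right
  by_cases hw : w ∈ q.support
  · by_cases hx1 : x ∈ (q.takeUntil w hw).support
    · have hax : Av G w a x := ⟨(q.takeUntil w hw).takeUntil x hx1,
        end_not_mem_takeUntil (hq.takeUntil hw) hx1 hxw⟩
      rcases ha with rfl | hau
      · exfalso
        have : (q.takeUntil a hw) = Walk.nil := Walk.isPath_iff_eq_nil.mp (hq.takeUntil hw)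
        rw [this] at hx1
        exact hxw (by simpa using hx1)
      · exact hau.trans hax
    · have hx2 : x ∈ (q.dropUntil w hw).support := by
        have hxq : x ∈ ((q.takeUntil w hw).append (q.dropUntil w hw)).support := by
          rw [Walk.take_spec q hw]; exact hx
        rcases (Walk.mem_support_append_iff _ _).mp hxq with h | h
        · exact absurd h hx1
        · exact h
      have hx2' : x ∈ (q.dropUntil w hw).reverse.support := by
        rwa [mem_support_reverse]
      have hbx : Av G w b x := ⟨((q.dropUntil w hw).reverse).takeUntil x hx2',
        end_not_mem_takeUntil (hq.dropUntil hw).reverse hx2' hxw⟩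
      rcases hb with rfl | hbu
      · exfalso
        have hnil : (q.dropUntil b hw).reverse = Walk.nil :=
          Walk.isPath_iff_eq_nil.mp (hq.dropUntil hw).reverse
        rw [hnil] at hx2'
        exact hxw (by simpa using hx2')
      · exact hbu.trans hbx
  · rcases ha with rfl | hau
    · exact absurd q.start_mem_support hw
    · exact hau.trans ⟨q.takeUntil x hx, fun hc => hw ((q.support_takeUntil_subset hx) hc)⟩

/-- Applying the fan lemma inside an induced subgraph and projecting back. -/
lemma induced_fan {S : Set V} {w : V} (hw : w ∈ S)
    (hconnw : ∀ a ∈ S, ∃ q : G.Walk a w, (∀ x ∈ q.support, x ∈ S))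
    (havoid : ∀ z ∈ S, ∀ a ∈ S, ∀ b ∈ S, a ≠ z → b ≠ z →
      ∃ q : G.Walk a b, z ∉ q.support ∧ ∀ x ∈ q.support, x ∈ S)
    {u v : V} (hu : u ∈ S) (hv : v ∈ S) (huv : u ≠ v) (huw : u ≠ w) (hvw : v ≠ w) :
    ∃ p : G.Walk u v, p.IsPath ∧ w ∈ p.support ∧ ∀ x ∈ p.support, x ∈ S := by
  classical
  have hpre : (G.induce S).Preconnected := by
    have hhub : ∀ a : S, (G.induce S).Reachable a ⟨w, hw⟩ := by
      rintro ⟨a, ha⟩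
      obtain ⟨q, hq⟩ := hconnw a ha
      obtain ⟨Q, _⟩ := lift_walk q ha hw hq
      exact ⟨Q⟩
    intro a b
    exact (hhub a).trans (hhub b).symm
  have h2 : ∀ (z a b : S), a ≠ z → b ≠ z → Av (G.induce S) z a b := by
    rintro ⟨z, hz⟩ ⟨a, ha⟩ ⟨b, hb⟩ haz hbz
    obtain ⟨q, hzq, hq⟩ := havoid z hz a ha b hb
      (fun h => haz (Subtype.ext h)) (fun h => hbz (Subtype.ext h))
    obtain ⟨Q, hQ⟩ := lift_walk q ha hb hq
    refine ⟨Q, fun hc => hzq ?_⟩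
    rw [← hQ]
    exact List.mem_map.mpr ⟨_, hc, rfl⟩
  obtain ⟨π, hπ, hwπ⟩ := fan_lemma hpre h2 (u := ⟨u, hu⟩) (v := ⟨v, hv⟩) (w := ⟨w, hw⟩)
    (fun h => huv (congrArg Subtype.val h)) (fun h => huw (congrArg Subtype.val h))
    (fun h => hvw (congrArg Subtype.val h))
  obtain ⟨p, hps, hpp⟩ := proj_walk π
  refine ⟨p, hpp hπ, ?_, ?_⟩
  · rw [hps]; exact List.mem_map.mpr ⟨⟨w, hw⟩, hwπ, rfl⟩
  · intro x hx
    rw [hps] at hx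
    obtain ⟨y, _, rfl⟩ := List.mem_map.mp hx
    exact y.2

end Glue

namespace LemB
open CFT CFT2 Fan Glue
variable {V : Type*} {G : SimpleGraph V}

theorem lemmaB (hconn : G.Connected)
    (honecut : ∀ x y, IsCutVertex G x → IsCutVertex G y → x = y) :
    ∃ c : V → ℕ, (∀ v, c v < 2) ∧ IsCFVertexConnColoring G c := by
  classical
  have hV : Nonempty V := hconn.nonempty
  obtain ⟨w, hwprop⟩ : ∃ w, ∀ z, z ≠ w → ¬ IsCutVertex G z := by
    by_cases h : ∃ x, IsCutVertex G x
    · obtain ⟨x, hx⟩ := h; exact ⟨x, fun z hz hcz => hz (honecut z x hcz hx)⟩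
    · push_neg at h; exact ⟨Classical.arbitrary V, fun z _ => h z⟩
  refine ⟨fun v => if v = w then 0 else 1, fun v => by dsimp only; split <;> omega, ?_⟩
  intro u v huv
  have finish : ∀ p : G.Walk u v, p.IsPath → w ∈ p.support →
      ∃ p : G.Walk u v, p.IsPath ∧ ∃ col : ℕ,
        (p.support.filter (fun x => (if x = w then 0 else 1) = col)).length = 1 := by
    intro p hp hwp
    refine ⟨p, hp, 0, filter_one_of_unique (c := fun x => if x = w then 0 else 1) hp hwp
      (by simp) (fun x hx hcx => ?_)⟩
    by_contra hxw
    simp only [if_neg hxw] at hcx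
    exact one_ne_zero hcx
  by_cases hu : u = w
  · obtain ⟨q⟩ := hconn u v
    exact finish q.bypass q.bypass_isPath (hu ▸ q.bypass.start_mem_support)
  by_cases hv : v = w
  · obtain ⟨q⟩ := hconn u v
    exact finish q.bypass q.bypass_isPath (hv ▸ q.bypass.end_mem_support)
  by_cases hav : Av G w u v
  · -- u, v in the same component of G - w : use the fan
    set S : Set V := {x | x = w ∨ Av G w u x} with hS
    have hus : u ∈ S := Or.inr (Av.refl hu)
    have hvs : v ∈ S := Or.inr hav
    have hws : w ∈ S := Or.inl rfl
    have hclose : ∀ (a b : V), a ∈ S → b ∈ S → ∀ (q : G.Walk a b), q.IsPath →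
        ∀ x ∈ q.support, x ∈ S := fun a b ha hb q hq => path_supp_in_comp hq ha hb
    have hconnw : ∀ a ∈ S, ∃ q : G.Walk a w, (∀ x ∈ q.support, x ∈ S) := by
      intro a ha
      obtain ⟨q⟩ := hconn a w
      exact ⟨q.bypass, hclose a w ha hws q.bypass q.bypass_isPath⟩
    have havoid : ∀ z ∈ S, ∀ a ∈ S, ∀ b ∈ S, a ≠ z → b ≠ z →
        ∃ q : G.Walk a b, z ∉ q.support ∧ ∀ x ∈ q.support, x ∈ S := by
      intro z hz a ha b hb haz hbz
      by_cases hzw : z = w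
      · -- a, b ∈ K : they can avoid w
        subst hzw
        have haa : Av G z u a := (ha.resolve_left haz)
        have hbb : Av G z u b := (hb.resolve_left hbz)
        obtain ⟨q0, hq0⟩ := haa.symm.trans hbb
        refine ⟨q0.bypass, fun hc => hq0 (q0.support_bypass_subset hc), ?_⟩
        exact hclose a b ha hb q0.bypass q0.bypass_isPath
      · have hnc : ¬ IsCutVertex G z := hwprop z hzw
        obtain ⟨q0, hq0⟩ := av_of_not_cut hnc haz hbz
        refine ⟨q0.bypass, fun hc => hq0 (q0.support_bypass_subset hc), ?_⟩
        exact hclose a b ha hb q0.bypass q0.bypass_isPath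
    obtain ⟨p, hp, hwp, _⟩ := induced_fan hws hconnw havoid hus hvs huv hu hv
    exact finish p hp hwp
  · -- every u-v path goes through w
    obtain ⟨q⟩ := hconn u v
    refine finish q.bypass q.bypass_isPath ?_
    by_contra hwq
    exact hav ⟨q.bypass, hwq⟩

end LemB

namespace LemC
open CFT CFT2 Fan Glue
variable {V : Type*} {G : SimpleGraph V}

lemma dist_le_four [Fintype V] (hconn : G.Connected) (hdiam : G.diam ≤ 4) (u v : V) :
    G.dist u v ≤ 4 := by
  have hne : Nonempty V := hconn.nonempty
  have hfin : G.ediam ≠ ⊤ := by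
    obtain ⟨a, b, hab⟩ := exists_edist_eq_ediam_of_finite (G := G)
    rw [← hab]
    exact edist_ne_top_iff_reachable.mpr (hconn a b)
  exact le_trans (dist_le_diam hfin) hdiam

lemma one_le_length_of_ne {a b : V} (q : G.Walk a b) (h : a ≠ b) : 1 ≤ q.length :=
  Nat.one_le_iff_ne_zero.mpr (fun h0 => h (Walk.eq_of_length_eq_zero h0))

/-- a geodesic that must pass through a chain of intermediate vertices is long -/
lemma chain_contra [DecidableEq V] (hconn : G.Connected) (hdist4 : ∀ u v, G.dist u v ≤ 4)
    {a b c₀ c₁ c₂ c₃ : V}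
    (h0 : ¬ Av G c₀ a c₁) (h1 : ¬ Av G c₁ a c₂) (h2 : ¬ Av G c₂ a c₃) (h3 : ¬ Av G c₃ a b)
    (hac0 : a ≠ c₀) (hc01 : c₀ ≠ c₁) (hc12 : c₁ ≠ c₂) (hc23 : c₂ ≠ c₃) (hc3b : c₃ ≠ b) :
    False := by
  obtain ⟨p, hpp, hpl⟩ := (hconn a b).exists_path_of_dist
  have hm3 : c₃ ∈ p.support := by by_contra hc; exact h3 ⟨p, hc⟩
  have hm2 : c₂ ∈ (p.takeUntil c₃ hm3).support := by by_contra hc; exact h2 ⟨_, hc⟩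
  have hm1 : c₁ ∈ ((p.takeUntil c₃ hm3).takeUntil c₂ hm2).support := by
    by_contra hc; exact h1 ⟨_, hc⟩
  have hm0 : c₀ ∈ (((p.takeUntil c₃ hm3).takeUntil c₂ hm2).takeUntil c₁ hm1).support := by
    by_contra hc; exact h0 ⟨_, hc⟩
  have e4 := congrArg Walk.length (Walk.take_spec p hm3)
  have e3 := congrArg Walk.length (Walk.take_spec (p.takeUntil c₃ hm3) hm2)
  have e2 := congrArg Walk.length
    (Walk.take_spec ((p.takeUntil c₃ hm3).takeUntil c₂ hm2) hm1)
  have e1 := congrArg Walk.length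
    (Walk.take_spec (((p.takeUntil c₃ hm3).takeUntil c₂ hm2).takeUntil c₁ hm1) hm0)
  rw [Walk.length_append] at e4 e3 e2 e1
  have g4 := one_le_length_of_ne (p.dropUntil c₃ hm3) hc3b
  have g3 := one_le_length_of_ne ((p.takeUntil c₃ hm3).dropUntil c₂ hm2) hc23
  have g2 := one_le_length_of_ne
    (((p.takeUntil c₃ hm3).takeUntil c₂ hm2).dropUntil c₁ hm1) hc12
  have g1 := one_le_length_of_ne
    ((((p.takeUntil c₃ hm3).takeUntil c₂ hm2).takeUntil c₁ hm1).dropUntil c₀ hm0) hc01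
  have g0 := one_le_length_of_ne
    ((((p.takeUntil c₃ hm3).takeUntil c₂ hm2).takeUntil c₁ hm1).takeUntil c₀ hm0) hac0
  have hd := hdist4 a b
  omega

lemma step_sep (hconn : G.Preconnected) {γ z w : V} (h1 : ¬ Av G z γ w) (hwz : w ≠ z) :
    Av G w γ z := by
  classical
  obtain ⟨q0⟩ := hconn γ z
  by_cases hw : w ∈ q0.bypass.support
  · exact absurd ⟨q0.bypass.takeUntil w hw,
      end_not_mem_takeUntil q0.bypass_isPath hw hwz⟩ h1
  · exact ⟨q0.bypass, hw⟩

/-- Existence of an "unnested" cut vertex: some cut vertex `r` such that no other cut vertex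
is separated from `r` by a third cut vertex. -/
theorem exists_unnested [Nontrivial V] (hconn : G.Connected)
    (hdist4 : ∀ u v, G.dist u v ≤ 4)
    {x0 : V} (hx0 : IsCutVertex G x0) :
    ∃ r, IsCutVertex G r ∧ ∀ z z', IsCutVertex G z → IsCutVertex G z' →
      z ≠ r → z' ≠ z → z' ∉ Sep G z r := by
  classical
  have hpre := hconn.preconnected
  by_cases hx : ∀ z z', IsCutVertex G z → IsCutVertex G z' → z ≠ x0 → z' ≠ z → z' ∉ Sep G z x0
  · exact ⟨x0, hx0, hx⟩
  push_neg at hx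
  obtain ⟨z, z', hzc, hz'c, hzx0, hz'z, hz'mem⟩ := hx
  refine ⟨z, hzc, ?_⟩
  intro w w' hwc hw'c hwz hw'w hw'mem
  -- pick deep points
  obtain ⟨γ, hγ⟩ := sep_nonempty hz'c (exists_ne z') z hz'z.symm
  obtain ⟨β, hβ⟩ := sep_nonempty hw'c (exists_ne w') w hw'w.symm
  obtain ⟨α, hα⟩ := sep_nonempty hx0 (exists_ne x0) z hzx0
  by_cases hb : Av G z w z'
  · -- case (a): w on the z' side of z ; use the x0-side point α
    have h0 : ¬ Av G x0 α z := hα.2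
    have h1 : ¬ Av G z α w := by
      rintro hW
      have hAvzαx : Av G z α x0 := av_to_separator hpre hα hzx0.symm
      exact hz'mem.2 (((hAvzαx.symm.trans hW).trans hb).symm)
    have h2 : ¬ Av G w α w' := fun hW => hw'mem.2 (hW.symm.trans (step_sep hpre h1 hwz))
    have h3 : ¬ Av G w' α β := fun hW => hβ.2 (hW.symm.trans
      (step_sep hpre h2 hw'w))
    exact chain_contra hconn hdist4 h0 h1 h2 h3 hα.1 hzx0.symm hwz.symm hw'w.symm
      (fun h => hβ.1 h.symm)
  · -- case (b): use γ behind z'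
    have h0 : ¬ Av G z' γ z := hγ.2
    have h1 : ¬ Av G z γ w := by
      rintro hW
      have hAvzγz' : Av G z γ z' := av_to_separator hpre hγ hz'z
      exact hb ((hAvzγz'.symm.trans hW).symm)
    have h2 : ¬ Av G w γ w' := fun hW => hw'mem.2 (hW.symm.trans (step_sep hpre h1 hwz))
    have h3 : ¬ Av G w' γ β := fun hW => hβ.2 (hW.symm.trans (step_sep hpre h2 hw'w))
    exact chain_contra hconn hdist4 h0 h1 h2 h3 hγ.1 hz'z hwz.symm hw'w.symm
      (fun h => hβ.1 h.symm)

end LemC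

namespace LemC
open CFT CFT2 Fan Glue
variable {V : Type*} {G : SimpleGraph V}

lemma path_avoids_branch [DecidableEq V] {z' r a b : V} {q : G.Walk a b} (hq : q.IsPath)
    (ha : a = z' ∨ Av G z' a r) (hb : b = z' ∨ Av G z' b r) :
    ∀ x ∈ q.support, x ∉ Sep G z' r := by
  intro x hx hxs
  have hxz : x ≠ z' := hxs.1
  have h1 : z' ∈ (q.takeUntil x hx).support := by
    rcases ha with rfl | hav
    · exact Walk.start_mem_support _
    · by_contra hc
      exact hxs.2 ((Av.symm ⟨q.takeUntil x hx, hc⟩).trans hav)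
  have h2 : z' ∈ (q.dropUntil x hx).support := by
    rcases hb with rfl | hbv
    · exact Walk.end_mem_support _
    · by_contra hc
      exact hxs.2 (Av.trans (V := V) (G := G) ⟨q.dropUntil x hx, hc⟩ hbv)
  exact (mem_take_not_drop hq hx h1 hxz.symm) h2

/-- Two branches behind distinct unnested cut vertices are disjoint. -/
lemma sep_sep_disjoint (hconn : G.Connected) {r z z₂ : V}
    (hstar : ∀ w w', IsCutVertex G w → IsCutVertex G w' → w ≠ r → w' ≠ w → w' ∉ Sep G w r)
    (hzc : IsCutVertex G z) (hz₂c : IsCutVertex G z₂) (hzr : z ≠ r) (hz₂r : z₂ ≠ r)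
    (hzz₂ : z ≠ z₂) {x : V} (hx1 : x ∈ Sep G z r) (hx2 : x ∈ Sep G z₂ r) : False := by
  classical
  have hz2r : Av G z₂ z r := av_of_not_mem_sep hzz₂ (hstar z₂ z hz₂c hzc hz₂r hzz₂)
  have hzr2 : Av G z z₂ r := av_of_not_mem_sep hzz₂.symm (hstar z z₂ hzc hz₂c hzr hzz₂.symm)
  have hAv : Av G z x z₂ := by
    obtain ⟨q0⟩ := hconn.preconnected x z₂
    by_cases hzq : z ∈ q0.bypass.support
    · exfalso
      have : Av G z₂ x z := ⟨q0.bypass.takeUntil z hzq,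
        end_not_mem_takeUntil q0.bypass_isPath hzq hzz₂⟩
      exact hx2.2 (this.trans hz2r)
    · exact ⟨q0.bypass, hzq⟩
  exact hx1.2 (hAv.trans hzr2)

end LemC

namespace LemC
open CFT CFT2 Fan Glue
variable {V : Type*} {G : SimpleGraph V}

lemma pair_good (hconn : G.Connected) {r : V} (hrc : IsCutVertex G r)
    (hstar : ∀ z z', IsCutVertex G z → IsCutVertex G z' → z ≠ r → z' ≠ z → z' ∉ Sep G z r)
    {u v : V} (huv : u ≠ v) (hur : u ≠ r) (hvr : v ≠ r) (hav : Av G r u v)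
    (hcase : (∃ z, IsCutVertex G z ∧ z ≠ r ∧ u ∈ Sep G z r) ∨
      ((¬ ∃ z, IsCutVertex G z ∧ z ≠ r ∧ u ∈ Sep G z r) ∧
       (¬ ∃ z, IsCutVertex G z ∧ z ≠ r ∧ v ∈ Sep G z r))) :
    ∃ p : G.Walk u v, p.IsPath ∧ (r ∈ p.support ∨
      ∃ z, z ∈ p.support ∧ IsCutVertex G z ∧ z ≠ r ∧
        (∀ x ∈ p.support, IsCutVertex G x → x ≠ r → x = z)) := by
  classical
  have hpre := hconn.preconnected
  set C : Set V := {x | x = r ∨ (Av G r u x ∧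
    ¬ ∃ z, IsCutVertex G z ∧ z ≠ r ∧ x ∈ Sep G z r)} with hCdef
  have hCr : r ∈ C := Or.inl rfl
  have hbranch_core : ∀ (z0 x : V), IsCutVertex G z0 → z0 ≠ r → x ∈ Sep G z0 r → x ∈ C →
      False := by
    intro z0 x hz0c hz0r hxs hxC
    rcases hxC with rfl | ⟨_, hnb⟩
    · exact hxs.2 (Av.refl (fun h => hz0r h.symm))
    · exact hnb ⟨z0, hz0c, hz0r, hxs⟩
  have hCclosed : ∀ (a b : V), a ∈ C → b ∈ C → ∀ (q : G.Walk a b), q.IsPath →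
      ∀ x ∈ q.support, x ∈ C := by
    intro a b ha hb q hq x hx
    by_cases hxr : x = r
    · exact Or.inl hxr
    refine Or.inr ⟨?_, ?_⟩
    · have := path_supp_in_comp (w := r) (u0 := u) hq
        (ha.imp id (fun h => h.1)) (hb.imp id (fun h => h.1)) x hx
      exact this.resolve_left hxr
    · rintro ⟨z0, hz0c, hz0r, hxs⟩
      refine path_avoids_branch (r := r) hq ?_ ?_ x hx hxs
      · rcases ha with rfl | ⟨haK, hanb⟩
        · exact Or.inr (Av.refl (fun h => hz0r h.symm))
        · by_cases haz : a = z0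
          · exact Or.inl haz
          · exact Or.inr (av_of_not_mem_sep haz (fun hc => hanb ⟨z0, hz0c, hz0r, hc⟩))
      · rcases hb with rfl | ⟨hbK, hbnb⟩
        · exact Or.inr (Av.refl (fun h => hz0r h.symm))
        · by_cases hbz : b = z0
          · exact Or.inl hbz
          · exact Or.inr (av_of_not_mem_sep hbz (fun hc => hbnb ⟨z0, hz0c, hz0r, hc⟩))
  have hCconnw : ∀ a ∈ C, ∃ q : G.Walk a r, (∀ x ∈ q.support, x ∈ C) := by
    intro a ha
    obtain ⟨q0⟩ := hpre a r
    exact ⟨q0.bypass, hCclosed a r ha hCr q0.bypass q0.bypass_isPath⟩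
  have hCavoid : ∀ z0 ∈ C, ∀ a ∈ C, ∀ b ∈ C, a ≠ z0 → b ≠ z0 →
      ∃ q : G.Walk a b, z0 ∉ q.support ∧ ∀ x ∈ q.support, x ∈ C := by
    intro z0 hz0 a ha b hb haz hbz
    have hAvab : Av G z0 a b := by
      by_cases hz0r : z0 = r
      · subst hz0r
        have haK : Av G z0 u a := (ha.resolve_left haz).1
        have hbK : Av G z0 u b := (hb.resolve_left hbz).1
        exact haK.symm.trans hbK
      · by_cases hz0c : IsCutVertex G z0
        · have haa : Av G z0 a r := by
            rcases ha with rfl | ⟨_, hanb⟩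
            · exact Av.refl (fun h => hz0r h.symm)
            · exact av_of_not_mem_sep haz (fun hc => hanb ⟨z0, hz0c, hz0r, hc⟩)
          have hbb : Av G z0 b r := by
            rcases hb with rfl | ⟨_, hbnb⟩
            · exact Av.refl (fun h => hz0r h.symm)
            · exact av_of_not_mem_sep hbz (fun hc => hbnb ⟨z0, hz0c, hz0r, hc⟩)
          exact haa.trans hbb.symm
        · exact av_of_not_cut hz0c haz hbz
    obtain ⟨q0, hq0⟩ := hAvab
    exact ⟨q0.bypass, fun hc => hq0 (q0.support_bypass_subset hc),
      hCclosed a b ha hb q0.bypass q0.bypass_isPath⟩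
  rcases hcase with ⟨z, hzc, hzr, husep⟩ | ⟨hunb, hvnb⟩
  · -- CASE A : u lives in a branch behind z
    have huz : u ≠ z := husep.1
    -- branch facts (for any base point in Sep G z r)
    have hbrSep : ∀ (w0 x : V), w0 ∈ Sep G z r → Av G z w0 x → x ∈ Sep G z r := by
      intro w0 x hw0 hA
      exact ⟨hA.ne_right, fun hc => hw0.2 (hA.trans hc)⟩
    have hbrNocut : ∀ (w0 x : V), w0 ∈ Sep G z r → Av G z w0 x → ¬ IsCutVertex G x := by
      intro w0 x hw0 hA hxc
      exact hstar z x hzc hxc hzr hA.ne_right (hbrSep w0 x hw0 hA)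
    have hbrNer : ∀ (w0 x : V), w0 ∈ Sep G z r → Av G z w0 x → x ≠ r := by
      intro w0 x hw0 hA hxr
      refine (hbrSep w0 x hw0 hA).2 ?_
      rw [hxr]
      exact Av.refl (fun h => hzr h.symm)
    -- the path from u to z inside its branch component
    obtain ⟨q10⟩ := hpre u z
    have hq1p : q10.bypass.IsPath := q10.bypass_isPath
    have hq1s : ∀ x ∈ q10.bypass.support, x = z ∨ Av G z u x :=
      path_supp_in_comp hq1p (Or.inr (Av.refl huz)) (Or.inl rfl)
    by_cases hvz : v = z
    · -- pair (u, z) : the branch path itself works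
      subst hvz
      refine ⟨q10.bypass, hq1p, Or.inr ⟨v, q10.bypass.end_mem_support, hzc, hzr, ?_⟩⟩
      intro x hx hxc _
      rcases hq1s x hx with rfl | hA
      · rfl
      · exact absurd hxc (hbrNocut u x husep hA)
    by_cases hvSu : Av G z u v
    · -- u and v are in the same component behind z : fan through z inside the branch
      have hfan := induced_fan (S := {x | x = z ∨ Av G z u x}) (w := z) (Or.inl rfl)
        (fun a ha => by
          obtain ⟨q0⟩ := hpre a z
          exact ⟨q0.bypass, path_supp_in_comp q0.bypass_isPath ha (Or.inl rfl)⟩)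
        (fun z0 hz0 a ha b hb haz hbz => by
          have hAvab : Av G z0 a b := by
            by_cases hz0z : z0 = z
            · subst hz0z
              exact ((ha.resolve_left haz)).symm.trans (hb.resolve_left hbz)
            · have hz0m : Av G z u z0 := hz0.resolve_left hz0z
              exact av_of_not_cut (hbrNocut u z0 husep hz0m) haz hbz
          obtain ⟨q0, hq0⟩ := hAvab
          exact ⟨q0.bypass, fun hc => hq0 (q0.support_bypass_subset hc),
            fun x hx => path_supp_in_comp q0.bypass_isPath ha hb x hx⟩)
        (Or.inr (Av.refl huz)) (Or.inr hvSu) huv huz hvz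
      obtain ⟨p, hp, hzp, hps⟩ := hfan
      refine ⟨p, hp, Or.inr ⟨z, hzp, hzc, hzr, ?_⟩⟩
      intro x hx hxc _
      rcases hps x hx with rfl | hA
      · rfl
      · exact absurd hxc (hbrNocut u x husep hA)
    by_cases hvsep : v ∈ Sep G z r
    · -- v is behind z but in another component : glue the two branch paths at z
      obtain ⟨q30⟩ := hpre v z
      have hq3p : q30.bypass.IsPath := q30.bypass_isPath
      have hq3s : ∀ x ∈ q30.bypass.support, x = z ∨ Av G z v x :=
        path_supp_in_comp hq3p (Or.inr (Av.refl hvsep.1)) (Or.inl rfl)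
      have hjunction : ∀ x, x ∈ q10.bypass.support → x ∈ q30.bypass.reverse.support →
          x = z := by
        intro x hx1 hx3
        rw [mem_support_reverse] at hx3
        rcases hq1s x hx1 with rfl | hA1
        · rfl
        rcases hq3s x hx3 with rfl | hA3
        · rfl
        · exact absurd (hA1.trans hA3.symm) hvSu
      refine ⟨q10.bypass.append q30.bypass.reverse,
        isPath_append hq1p hq3p.reverse hjunction, Or.inr ⟨z, ?_, hzc, hzr, ?_⟩⟩
      · rw [Walk.mem_support_append_iff]
        exact Or.inl q10.bypass.end_mem_support
      · intro x hx hxc _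
        rcases (Walk.mem_support_append_iff _ _).mp hx with hx1 | hx3
        · rcases hq1s x hx1 with rfl | hA
          · rfl
          · exact absurd hxc (hbrNocut u x husep hA)
        · rw [mem_support_reverse] at hx3
          rcases hq3s x hx3 with rfl | hA
          · rfl
          · exact absurd hxc (hbrNocut v x hvsep hA)
    · -- v is on the r-side of z : go through the core
      have hzC : z ∈ C := Or.inr ⟨av_to_separator hpre husep hzr, by
        rintro ⟨z₂, hc, hne, hmem⟩
        exact hstar z₂ z hc hzc hne hmem.1 hmem⟩
      have hq1core : ∀ x, x ∈ q10.bypass.support → x ∈ C → x = z := by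
        intro x hx hxC
        rcases hq1s x hx with rfl | hA
        · rfl
        · exact absurd hxC (fun hc => hbranch_core z x hzc hzr (hbrSep u x husep hA) hc)
      by_cases hvbr : ∃ z₂, IsCutVertex G z₂ ∧ z₂ ≠ r ∧ v ∈ Sep G z₂ r
      · -- v is in a branch behind a different cut vertex z₂
        obtain ⟨z₂, hz₂c, hz₂r, hvsep₂⟩ := hvbr
        have hz₂z : z₂ ≠ z := fun h => hvsep (h ▸ hvsep₂)
        obtain ⟨q30⟩ := hpre v z₂
        have hq3p : q30.bypass.IsPath := q30.bypass_isPath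
        have hq3s : ∀ x ∈ q30.bypass.support, x = z₂ ∨ Av G z₂ v x :=
          path_supp_in_comp hq3p (Or.inr (Av.refl hvsep₂.1)) (Or.inl rfl)
        have hz₂C : z₂ ∈ C := Or.inr ⟨hav.trans (av_to_separator hpre hvsep₂ hz₂r), by
          rintro ⟨z₃, hc, hne, hmem⟩
          exact hstar z₃ z₂ hc hz₂c hne hmem.1 hmem⟩
        obtain ⟨π, hπ, hrπ, hπs⟩ := induced_fan (S := C) (w := r) hCr hCconnw hCavoid
          hzC hz₂C hz₂z.symm hzr hz₂r
        have hq3core : ∀ x, x ∈ q30.bypass.support → x ∈ C → x = z₂ := by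
          intro x hx hxC
          rcases hq3s x hx with rfl | hA
          · rfl
          · exact absurd hxC (fun hc => hbranch_core z₂ x hz₂c hz₂r
              ⟨hA.ne_right, fun hcc => hvsep₂.2 (hA.trans hcc)⟩ hc)
        have hinner : (π.append q30.bypass.reverse).IsPath := by
          refine isPath_append hπ hq3p.reverse (fun x hxπ hx3 => ?_)
          rw [mem_support_reverse] at hx3
          exact hq3core x hx3 (hπs x hxπ)
        have houter : ∀ x, x ∈ q10.bypass.support →
            x ∈ (π.append q30.bypass.reverse).support → x = z := by
          intro x hx1 hxi
          rcases (Walk.mem_support_append_iff _ _).mp hxi with hxπ | hx3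
          · exact hq1core x hx1 (hπs x hxπ)
          · rw [mem_support_reverse] at hx3
            rcases hq1s x hx1 with rfl | hA1
            · rfl
            rcases hq3s x hx3 with rfl | hA3
            · exact absurd (hbrSep u x husep hA1) (hstar z x hzc
                (by exact hz₂c) hzr hz₂z)
            · exact (sep_sep_disjoint hconn hstar hzc hz₂c hzr hz₂r
                (fun h => hz₂z h.symm) (hbrSep u x husep hA1)
                ⟨hA3.ne_right, fun hcc => hvsep₂.2 (hA3.trans hcc)⟩).elim
        refine ⟨q10.bypass.append (π.append q30.bypass.reverse),
          isPath_append hq1p hinner houter, Or.inl ?_⟩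
        rw [Walk.mem_support_append_iff]
        right
        rw [Walk.mem_support_append_iff]
        exact Or.inl hrπ
      · -- v is in the core
        have hvC : v ∈ C := Or.inr ⟨hav, hvbr⟩
        obtain ⟨π, hπ, hrπ, hπs⟩ := induced_fan (S := C) (w := r) hCr hCconnw hCavoid
          hzC hvC (fun h => hvz h.symm) hzr hvr
        refine ⟨q10.bypass.append π,
          isPath_append hq1p hπ (fun x hx1 hxπ => hq1core x hx1 (hπs x hxπ)), Or.inl ?_⟩
        rw [Walk.mem_support_append_iff]
        exact Or.inr hrπ
  · -- CASE B : both u and v are in the core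
    have huC : u ∈ C := Or.inr ⟨Av.refl hur, hunb⟩
    have hvC : v ∈ C := Or.inr ⟨hav, hvnb⟩
    obtain ⟨p, hp, hrp, _⟩ := induced_fan (S := C) (w := r) hCr hCconnw hCavoid
      huC hvC huv hur hvr
    exact ⟨p, hp, Or.inl hrp⟩

end LemC

namespace LemC
open CFT CFT2 Fan Glue
variable {V : Type*} {G : SimpleGraph V}

theorem lemmaC_coloring (hconn : G.Connected) {r : V} (hrc : IsCutVertex G r)
    (hstar : ∀ z z', IsCutVertex G z → IsCutVertex G z' → z ≠ r → z' ≠ z → z' ∉ Sep G z r) :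
    ∃ c : V → ℕ, (∀ v, c v < 3) ∧ IsCFVertexConnColoring G c := by
  classical
  refine ⟨fun x => if x = r then 0 else if IsCutVertex G x then 2 else 1, ?_, ?_⟩
  · intro x
    dsimp only
    split
    · omega
    · split <;> omega
  intro u v huv
  have fin0 : ∀ (p : G.Walk u v), p.IsPath → r ∈ p.support → ∃ col : ℕ,
      (p.support.filter
        (fun x => (if x = r then 0 else if IsCutVertex G x then 2 else 1) = col)).length = 1 := by
    intro p hp hr
    refine ⟨0, filter_one_of_unique hp hr (by simp) ?_⟩
    intro x hx hcx
    by_contra hxr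
    rw [if_neg hxr] at hcx
    split at hcx <;> omega
  have fin2 : ∀ (p : G.Walk u v), p.IsPath → ∀ z, z ∈ p.support → IsCutVertex G z → z ≠ r →
      (∀ x ∈ p.support, IsCutVertex G x → x ≠ r → x = z) → ∃ col : ℕ,
      (p.support.filter
        (fun x => (if x = r then 0 else if IsCutVertex G x then 2 else 1) = col)).length = 1 := by
    intro p hp z hz hzc hzr huniq
    refine ⟨2, filter_one_of_unique hp hz (by rw [if_neg hzr, if_pos hzc]) ?_⟩
    intro x hx hcx
    by_cases hxr : x = r
    · rw [if_pos hxr] at hcx; omega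
    · rw [if_neg hxr] at hcx
      by_cases hxc : IsCutVertex G x
      · exact huniq x hx hxc hxr
      · rw [if_neg hxc] at hcx; omega
  by_cases hur : u = r
  · obtain ⟨q0⟩ := hconn u v
    exact ⟨q0.bypass, q0.bypass_isPath,
      fin0 q0.bypass q0.bypass_isPath (hur ▸ q0.bypass.start_mem_support)⟩
  by_cases hvr : v = r
  · obtain ⟨q0⟩ := hconn u v
    exact ⟨q0.bypass, q0.bypass_isPath,
      fin0 q0.bypass q0.bypass_isPath (hvr ▸ q0.bypass.end_mem_support)⟩
  by_cases hav : Av G r u v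
  · have use_good : ∀ (p : G.Walk u v), p.IsPath → (r ∈ p.support ∨
        ∃ z, z ∈ p.support ∧ IsCutVertex G z ∧ z ≠ r ∧
          (∀ x ∈ p.support, IsCutVertex G x → x ≠ r → x = z)) →
        ∃ p : G.Walk u v, p.IsPath ∧ ∃ col : ℕ,
          (p.support.filter
            (fun x => (if x = r then 0 else if IsCutVertex G x then 2 else 1) = col)).length
              = 1 := by
      intro p hp hgood
      rcases hgood with hr | ⟨z, hz, hzc, hzr, huniq⟩
      · exact ⟨p, hp, fin0 p hp hr⟩
      · exact ⟨p, hp, fin2 p hp z hz hzc hzr huniq⟩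
    by_cases hub : ∃ z, IsCutVertex G z ∧ z ≠ r ∧ u ∈ Sep G z r
    · obtain ⟨p, hp, hgood⟩ := pair_good hconn hrc hstar huv hur hvr hav (Or.inl hub)
      exact use_good p hp hgood
    by_cases hvb : ∃ z, IsCutVertex G z ∧ z ≠ r ∧ v ∈ Sep G z r
    · obtain ⟨p, hp, hgood⟩ := pair_good hconn hrc hstar huv.symm hvr hur hav.symm
        (Or.inl hvb)
      refine use_good p.reverse hp.reverse ?_
      rcases hgood with hr | ⟨z, hz, hzc, hzr, huniq⟩
      · exact Or.inl ((mem_support_reverse p).mpr hr)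
      · exact Or.inr ⟨z, (mem_support_reverse p).mpr hz, hzc, hzr,
          fun x hx => huniq x ((mem_support_reverse p).mp hx)⟩
    · obtain ⟨p, hp, hgood⟩ := pair_good hconn hrc hstar huv hur hvr hav
        (Or.inr ⟨hub, hvb⟩)
      exact use_good p hp hgood
  · obtain ⟨q0⟩ := hconn u v
    have hrq : r ∈ q0.bypass.support := by
      by_contra hc
      exact hav ⟨q0.bypass, hc⟩
    exact ⟨q0.bypass, q0.bypass_isPath, fin0 q0.bypass q0.bypass_isPath hrq⟩

end LemC

section Main
open CFT CFT2 Fan Glue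
variable {V : Type*}

theorem vcfConn_eq_three_iff' [Fintype V] (G : SimpleGraph V)
    (hcard : 3 ≤ Fintype.card V) (hconn : G.Connected) (hdiam : G.diam ≤ 4) :
    vcfConn G = 3 ↔
      ∃ x y : V, x ≠ y ∧ IsCutVertex G x ∧ IsCutVertex G y := by
  classical
  have hnt : Nontrivial V := Fintype.one_lt_card_iff_nontrivial.mp (by omega)
  set S : Set ℕ := {k | ∃ c : V → ℕ, (∀ v, c v < k) ∧ IsCFVertexConnColoring G c} with hSdef
  have hvcf : vcfConn G = sInf S := rfl
  have hmono : ∀ {k k' : ℕ}, k ≤ k' → k ∈ S → k' ∈ S := by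
    rintro k k' hkk ⟨c, hck, hcf⟩
    exact ⟨c, fun v => lt_of_lt_of_le (hck v) hkk, hcf⟩
  have hcardS : Fintype.card V ∈ S := by
    refine ⟨fun v => (Fintype.equivFin V v : ℕ), fun v => (Fintype.equivFin V v).2, ?_⟩
    intro u v huv
    obtain ⟨q0⟩ := hconn u v
    refine ⟨q0.bypass, q0.bypass_isPath, (Fintype.equivFin V u : ℕ),
      filter_one_of_unique q0.bypass_isPath q0.bypass.start_mem_support rfl ?_⟩
    intro x hx hcx
    exact (Fintype.equivFin V).injective (Fin.val_injective hcx)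
  have hSne : S.Nonempty := ⟨_, hcardS⟩
  rw [hvcf]
  constructor
  · intro h3
    have h3S : 3 ∈ S := by
      have := Nat.sInf_mem hSne
      rwa [h3] at this
    have h2S : 2 ∉ S := by
      intro h2
      have := Nat.sInf_le h2
      omega
    by_contra hno
    push_neg at hno
    have honecut : ∀ x y, IsCutVertex G x → IsCutVertex G y → x = y := by
      intro x y hx hy
      by_contra hxy
      exact (hno x y hxy hx) hy
    obtain ⟨c, hc2, hcf⟩ := LemB.lemmaB hconn honecut
    exact h2S ⟨c, hc2, hcf⟩
  · rintro ⟨x, y, hxy, hx, hy⟩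
    have hdist4 : ∀ u v, G.dist u v ≤ 4 := fun u v => LemC.dist_le_four hconn hdiam u v
    obtain ⟨r, hrc, hstar⟩ := LemC.exists_unnested hconn hdist4 hx
    obtain ⟨c, hc3, hcf⟩ := LemC.lemmaC_coloring hconn hrc hstar
    have h3S : 3 ∈ S := ⟨c, hc3, hcf⟩
    have h2S : 2 ∉ S := by
      rintro ⟨c', hc', hcf'⟩
      exact LemA.lemmaA hconn hxy hx hy hc' hcf'
    have hle := Nat.sInf_le h3S
    have hmem := Nat.sInf_mem hSne
    have hge : 3 ≤ sInf S := by
      by_contra hlt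
      push_neg at hlt
      exact h2S (hmono (by omega) hmem)
    omega

end Main

/-- For a connected graph `G` on at least `3` vertices with `diam(G) ≤ 4`,
`vcfc(G) = 3` if and only if `G` has more than one cut-vertex. -/
theorem vcfConn_eq_three_iff {V : Type*} [Fintype V] (G : SimpleGraph V)
    (hcard : 3 ≤ Fintype.card V) (hconn : G.Connected) (hdiam : G.diam ≤ 4) :
    vcfConn G = 3 ↔
      ∃ x y : V, x ≠ y ∧ IsCutVertex G x ∧ IsCutVertex G y := by
  exact vcfConn_eq_three_iff' G hcard hconn hdiam
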